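/- arXiv:1111.6020 — 6 statements merged into one kernel-verified Lean document; each statement's English description precedes it below -/
import Mathlib

section
/- Suppose smooth curves q_0, …, q_k : ℝ → ℝⁿ and p^0, …, p^{k-1} : ℝ → ℝⁿ satisfy, for all t (with all partial gradients of L evaluated at (t, q_0(t), …, q_k(t))): (i) (p^0)′ = ∂L/∂q_0; (ii) (p^i)′ = ∂L/∂q_i − p^{i−1} for 1 ≤ i ≤ k−1; (iii) p^{k-1} = ∂L/∂q_k; and (iv) q_i′ = q_{i+1} for 0 ≤ i ≤ k−1. Then the remaining equation of the unified formalism is automatically satisfied: Σ_{r=0}^{k} ⟨∂L/∂q_r, q_r′⟩ − Σ_{i=0}^{k-1} ⟨q_{i+1}, (p^i)′⟩ − Σ_{i=0}^{k-1} ⟨p^i, q_{i+1}′⟩ = 0 for all t. (Redundancy of the first equation obtained from the Skinner–Rusk dynamical equation for sections.) -/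
open scoped ContDiff RealInnerProductSpace

noncomputable section

/-- `ℝⁿ` as a Euclidean space. -/
abbrev Evec (n : ℕ) := EuclideanSpace ℝ (Fin n)

/-- The partial gradient `∂L/∂q_i` of a `k`-th order Lagrangian
`L : ℝ × (ℝⁿ)^(k+1) → ℝ` with respect to the variable `q_i`. -/
noncomputable def pgrad {n k : ℕ} (L : ℝ × (Fin (k+1) → Evec n) → ℝ)
    (i : Fin (k+1)) (x : ℝ × (Fin (k+1) → Evec n)) : Evec n :=
  gradient (fun v => L (x.1, Function.update x.2 i v)) (x.2 i)

/-- If smooth curves `q_0, …, q_k` and `p^0, …, p^{k-1}` satisfy the momentum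
equations, the algebraic condition `p^{k-1} = ∂L/∂q_k` and the holonomy `q_i' = q_{i+1}`, then
the remaining ("redundant") equation of the unified formalism holds automatically:
`∑_{r=0}^{k} ⟨∂L/∂q_r, q_r'⟩ − ∑_{i=0}^{k-1} ⟨q_{i+1}, (p^i)'⟩ − ∑_{i=0}^{k-1} ⟨p^i, q_{i+1}'⟩ = 0`. -/
theorem stmt2 (n k : ℕ) (hn : 1 ≤ n) (hk : 1 ≤ k)
    (L : ℝ × (Fin (k+1) → Evec n) → ℝ) (hL : ContDiff ℝ ∞ L)
    (q : ℕ → ℝ → Evec n) (hq : ∀ i ≤ k, ContDiff ℝ ∞ (q i))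
    (p : ℕ → ℝ → Evec n) (hp : ∀ i ≤ k - 1, ContDiff ℝ ∞ (p i))
    (heq1 : ∀ t, deriv (p 0) t = pgrad L 0 (t, fun j : Fin (k+1) => q (j : ℕ) t))
    (heq2 : ∀ i, 1 ≤ i → ∀ hik : i ≤ k - 1, ∀ t,
      deriv (p i) t =
        pgrad L ⟨i, by omega⟩ (t, fun j : Fin (k+1) => q (j : ℕ) t) - p (i-1) t)
    (heq3 : ∀ t, p (k-1) t = pgrad L ⟨k, Nat.lt_succ_self k⟩ (t, fun j : Fin (k+1) => q (j : ℕ) t))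
    (heq4 : ∀ i ≤ k - 1, ∀ t, deriv (q i) t = q (i+1) t) :
    ∀ t : ℝ,
      (∑ r : Fin (k+1), ⟪pgrad L r (t, fun j : Fin (k+1) => q (j : ℕ) t), deriv (q (r : ℕ)) t⟫)
      - (∑ i : Fin k, ⟪q ((i : ℕ)+1) t, deriv (p (i : ℕ)) t⟫)
      - (∑ i : Fin k, ⟪p (i : ℕ) t, deriv (q ((i : ℕ)+1)) t⟫) = 0 := by
  obtain ⟨m, rfl⟩ : ∃ m, k = m + 1 := ⟨k - 1, by omega⟩
  intro t
  set x : ℝ × (Fin (m+1+1) → Evec n) := (t, fun j : Fin (m+1+1) => q (j : ℕ) t) with hx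
  set g : ℕ → Evec n := fun i => if h : i < m+2 then pgrad L ⟨i, h⟩ x else 0 with hg
  have hg' : ∀ (r : Fin (m+1+1)), pgrad L r x = g (r : ℕ) := by
    intro r
    simp only [hg, r.isLt, dif_pos, Fin.eta]
  -- rewrite S1
  have hS1 : (∑ r : Fin (m+1+1), ⟪pgrad L r x, deriv (q (r:ℕ)) t⟫)
      = (∑ i ∈ Finset.range (m+1), ⟪g i, q (i+1) t⟫) + ⟪g (m+1), deriv (q (m+1)) t⟫ := by
    have e1 : (∑ i ∈ Finset.range (m+2), ⟪g i, deriv (q i) t⟫)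
        = (∑ r : Fin (m+1+1), ⟪pgrad L r x, deriv (q (r:ℕ)) t⟫) := by
      rw [Finset.sum_range (fun i => ⟪g i, deriv (q i) t⟫)]
      exact Finset.sum_congr rfl fun r _ => by rw [hg' r]
    rw [← e1, Finset.sum_range_succ]
    congr 1
    refine Finset.sum_congr rfl fun i hi => ?_
    rw [heq4 i (by simp only [Finset.mem_range] at hi; omega) t]
  have hS2 : (∑ i : Fin (m+1), ⟪q ((i:ℕ)+1) t, deriv (p (i:ℕ)) t⟫)
      = (∑ i ∈ Finset.range (m+1), ⟪q (i+1) t, g i⟫)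
        - (∑ j ∈ Finset.range m, ⟪q (j+2) t, p j t⟫) := by
    have hder : ∀ i ≤ m, deriv (p i) t
        = g i - (if i = 0 then 0 else p (i-1) t) := by
      intro i hi
      rcases Nat.eq_zero_or_pos i with h0 | h0
      · subst h0
        simp only [if_pos rfl, sub_zero, heq1 t]
        rw [show (0 : Fin (m+1+1)) = ⟨0, by omega⟩ from rfl, ← hx]
        simp [hg]
      · rw [heq2 i h0 (by omega) t, if_neg (by omega)]
        congr 1
        rw [← hx]
        exact hg' ⟨i, by omega⟩
    rw [Fin.sum_univ_eq_sum_range (fun i => ⟪q (i+1) t, deriv (p i) t⟫)]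
    have e2 : ∀ i ∈ Finset.range (m+1), ⟪q (i+1) t, deriv (p i) t⟫
        = ⟪q (i+1) t, g i⟫ - ⟪q (i+1) t, (if i = 0 then (0:Evec n) else p (i-1) t)⟫ := by
      intro i hi
      simp only [Finset.mem_range] at hi
      rw [hder i (by omega), inner_sub_right]
    rw [Finset.sum_congr rfl e2, Finset.sum_sub_distrib]
    congr 1
    rw [Finset.sum_range_succ' (fun i => ⟪q (i+1) t, (if i = 0 then (0:Evec n) else p (i-1) t)⟫) m]
    simp
  have hS3 : (∑ i : Fin (m+1), ⟪p (i:ℕ) t, deriv (q ((i:ℕ)+1)) t⟫)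
      = (∑ j ∈ Finset.range m, ⟪p j t, q (j+2) t⟫) + ⟪g (m+1), deriv (q (m+1)) t⟫ := by
    rw [Fin.sum_univ_eq_sum_range (fun i => ⟪p i t, deriv (q (i+1)) t⟫),
      Finset.sum_range_succ]
    congr 1
    · refine Finset.sum_congr rfl fun i hi => ?_
      simp only [Finset.mem_range] at hi
      rw [heq4 (i+1) (by omega) t]
    · have := heq3 t
      simp only [Nat.add_sub_cancel] at this
      rw [this, ← hx]
      rw [hg' ⟨m+1, by omega⟩]
  rw [hS1, hS2, hS3]
  have c1 : (∑ i ∈ Finset.range (m+1), ⟪g i, q (i+1) t⟫)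
      = ∑ i ∈ Finset.range (m+1), ⟪q (i+1) t, g i⟫ :=
    Finset.sum_congr rfl fun i _ => real_inner_comm _ _
  have c2 : (∑ j ∈ Finset.range m, ⟪q (j+2) t, p j t⟫)
      = ∑ j ∈ Finset.range m, ⟪p j t, q (j+2) t⟫ :=
    Finset.sum_congr rfl fun j _ => real_inner_comm _ _
  rw [c1, c2]
  ring
end
end

section
/- At every point (t, q_0, q_1, q_2) with q_1 ≠ 0 and g(q_1, q_2) > 0, the Hessian matrix of the relativistic-particle Lagrangian L with respect to q_2 annihilates both q_1 and q_2: for each index A, Σ_B (∂²L/∂q_2^A ∂q_2^B) q_1^B = 0 and Σ_B (∂²L/∂q_2^A ∂q_2^B) q_2^B = 0. -/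
open scoped ContDiff RealInnerProductSpace

noncomputable section

/-- At every point with `q₁ ≠ 0` and `g(q₁, q₂) > 0`, the Hessian of the
relativistic-particle Lagrangian `L = (α/|q₁|²)√g + V(t, q₀)` with respect to `q₂`
annihilates both `q₁` and `q₂`. -/
theorem stmt12 (n : ℕ) (hn : 2 ≤ n) (α : ℝ) (hα : α ≠ 0)
    (V : ℝ × Evec n → ℝ) (hV : ContDiff ℝ ∞ V)
    (L : ℝ × Evec n × Evec n × Evec n → ℝ)
    (hL : ∀ (t : ℝ) (a b c : Evec n),
      L (t, a, b, c) = (α / ‖b‖^2) * Real.sqrt (‖b‖^2 * ‖c‖^2 - ⟪b, c⟫^2) + V (t, a))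
    (t : ℝ) (q0 q1 q2 : Evec n) (hq1 : q1 ≠ 0)
    (hg : 0 < ‖q1‖^2 * ‖q2‖^2 - ⟪q1, q2⟫^2)
    (W : Matrix (Fin n) (Fin n) ℝ)
    (hW : ∀ A B, W A B =
      fderiv ℝ (fun v : Evec n => gradient (fun w : Evec n => L (t, q0, q1, w)) v A)
        q2 (EuclideanSpace.single B 1)) :
    ∀ A : Fin n, (∑ B : Fin n, W A B * q1 B = 0) ∧ (∑ B : Fin n, W A B * q2 B = 0) := by
  set c : ℝ := α / ‖q1‖^2 with hc
  set Fn : Evec n → ℝ := fun w => ‖q1‖^2 * ‖w‖^2 - ⟪q1, w⟫^2 with hFn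
  set G : Evec n → Evec n :=
    fun w => (c / Real.sqrt (Fn w)) • ((‖q1‖^2 : ℝ) • w - ⟪q1, w⟫ • q1) with hG
  -- the function of interest
  have hfun : (fun w : Evec n => L (t, q0, q1, w))
      = fun w => c * Real.sqrt (Fn w) + V (t, q0) := by
    funext w; rw [hL]
  -- gradient computation
  have gradEq : ∀ w : Evec n, 0 < Fn w →
      HasGradientAt (fun v : Evec n => L (t, q0, q1, v)) (G w) w := by
    intro w hw
    have hs : Real.sqrt (Fn w) ≠ 0 := (Real.sqrt_pos.2 hw).ne'
    have hWW := (hasFDerivAt_id (𝕜 := ℝ) w).inner ℝ (hasFDerivAt_id w)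
    have hQ : HasFDerivAt (fun v : Evec n => ⟪q1, v⟫) (innerSL ℝ q1) w :=
      (innerSL ℝ q1).hasFDerivAt
    have hFeq : Fn = fun v : Evec n => ‖q1‖^2 * ⟪v, v⟫ - ⟪q1, v⟫ * ⟪q1, v⟫ := by
      funext v; simp only [hFn, real_inner_self_eq_norm_sq, sq]
    have hF := ((hWW.const_mul (‖q1‖^2)).sub (hQ.mul hQ))
    simp only [id] at hF
    rw [show ((fun y : Evec n => ‖q1‖ ^ 2 * ⟪y, y⟫) - (fun v : Evec n => ⟪q1, v⟫) * fun v => ⟪q1, v⟫) = Fn from hFeq.symm] at hF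
    have hsq := (Real.hasDerivAt_sqrt hw.ne').comp_hasFDerivAt w hF
    have hf := (hsq.const_mul c).add_const (V (t, q0))
    rw [hasGradientAt_iff_hasFDerivAt, hfun]
    refine hf.congr_fderiv ?_
    ext v
    simp only [ContinuousLinearMap.smul_apply, ContinuousLinearMap.add_apply,
      ContinuousLinearMap.sub_apply, ContinuousLinearMap.comp_apply,
      ContinuousLinearMap.prod_apply, ContinuousLinearMap.id_apply,
      fderivInnerCLM_apply, innerSL_apply_apply, InnerProductSpace.toDual_apply_apply,
      smul_eq_mul, hG, real_inner_smul_left, inner_sub_left]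
    rw [real_inner_comm v w]
    field_simp
    ring
  -- eventual positivity and equality to G
  have hFc : ContDiff ℝ ∞ Fn := by
    simp only [hFn]
    exact (contDiff_const.mul (contDiff_norm_sq (𝕜 := ℝ))).sub
      ((ContDiff.inner ℝ contDiff_const contDiff_id).pow 2)
  have hFcont : Continuous Fn := hFc.continuous
  have hFpos : ∀ᶠ v in nhds q2, 0 < Fn v :=
    hFcont.continuousAt.eventually (eventually_gt_nhds hg)
  intro A
  have heq : (fun v : Evec n => gradient (fun w : Evec n => L (t, q0, q1, w)) v A)
      =ᶠ[nhds q2] (fun v => G v A) := by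
    filter_upwards [hFpos] with v hv
    exact congrArg (fun z : Evec n => z A) (gradEq v hv).gradient
  have hfd : fderiv ℝ (fun v : Evec n => gradient (fun w : Evec n => L (t, q0, q1, w)) v A) q2
      = fderiv ℝ (fun v : Evec n => G v A) q2 := heq.fderiv_eq
  set D := fderiv ℝ (fun v : Evec n => G v A) q2 with hD
  -- differentiability of G · A
  have hsq2 : Real.sqrt (Fn q2) ≠ 0 := (Real.sqrt_pos.2 hg).ne'
  have hGA : (fun v : Evec n => G v A)
      = fun v => c * (‖q1‖^2 * v A - ⟪q1, v⟫ * q1 A) / Real.sqrt (Fn v) := by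
    funext v
    simp [hG, PiLp.smul_apply, PiLp.sub_apply, smul_eq_mul]
    ring
  have hFdiff : Differentiable ℝ Fn := hFc.differentiable (by norm_num)
  have hdiffA : DifferentiableAt ℝ (fun v : Evec n => G v A) q2 := by
    rw [hGA]
    have hnum : DifferentiableAt ℝ
        (fun v : Evec n => c * (‖q1‖^2 * v A - ⟪q1, v⟫ * q1 A)) q2 := by
      apply DifferentiableAt.const_mul
      apply DifferentiableAt.sub
      · exact ((EuclideanSpace.proj (𝕜 := ℝ) A).differentiableAt).const_mul _
      · exact (((innerSL ℝ q1).differentiableAt).mul_const _)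
    have hden : DifferentiableAt ℝ (fun v : Evec n => Real.sqrt (Fn v)) q2 :=
      (hFdiff q2).sqrt hg.ne'
    simp only [div_eq_mul_inv]
    exact hnum.mul (hden.inv hsq2)
  -- directional derivative along u is zero when G is constant along the line
  have key : ∀ u : Evec n,
      ((fun s : ℝ => G (q2 + s • u) A) =ᶠ[nhds (0:ℝ)] fun _ => G q2 A) → D u = 0 := by
    intro u hconst
    have hline : HasDerivAt (fun s : ℝ => q2 + s • u) u 0 := by
      simpa using ((hasDerivAt_id (0:ℝ)).smul_const u).const_add q2
    have hfd0 : HasFDerivAt (fun v : Evec n => G v A) D (q2 + (0:ℝ) • u) := by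
      rw [show q2 + (0:ℝ) • u = q2 by simp]
      exact hdiffA.hasFDerivAt
    have hcomp : HasDerivAt (fun s : ℝ => G (q2 + s • u) A) (D u) 0 :=
      by have := hfd0.comp_hasDerivAt 0 hline; exact this
    have hzero : HasDerivAt (fun s : ℝ => G (q2 + s • u) A) 0 0 :=
      (hasDerivAt_const (0:ℝ) (G q2 A)).congr_of_eventuallyEq hconst
    exact hcomp.unique hzero
  -- invariance identities
  have hinv1 : ∀ s : ℝ, G (q2 + s • q1) = G q2 := by
    intro s
    have hFI : Fn (q2 + s • q1) = Fn q2 := by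
      simp only [hFn, ← real_inner_self_eq_norm_sq, inner_add_left, inner_add_right,
        real_inner_smul_left, real_inner_smul_right, real_inner_comm q2 q1]
      ring
    have hvec : (‖q1‖^2 : ℝ) • (q2 + s • q1) - ⟪q1, q2 + s • q1⟫ • q1
        = (‖q1‖^2 : ℝ) • q2 - ⟪q1, q2⟫ • q1 := by
      rw [inner_add_right, real_inner_smul_right, real_inner_self_eq_norm_sq]
      ext B
      simp [PiLp.smul_apply, PiLp.sub_apply, PiLp.add_apply, smul_eq_mul]
      ring
    simp only [hG, hFI, hvec]
  have hinv2 : ∀ s : ℝ, -1 < s → G (q2 + s • q2) = G q2 := by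
    intro s hs
    have hl : (0:ℝ) < 1 + s := by linarith
    have h1 : q2 + s • q2 = (1 + s) • q2 := by
      rw [add_smul, one_smul]
    have hFI : Fn ((1 + s) • q2) = (1 + s)^2 * Fn q2 := by
      simp only [hFn, norm_smul, real_inner_smul_right, Real.norm_eq_abs,
        mul_pow, sq_abs]
      ring
    have hsqI : Real.sqrt (Fn ((1 + s) • q2)) = (1 + s) * Real.sqrt (Fn q2) := by
      rw [hFI, Real.sqrt_mul (sq_nonneg _), Real.sqrt_sq hl.le]
    have hvec : (‖q1‖^2 : ℝ) • ((1 + s) • q2) - ⟪q1, (1 + s) • q2⟫ • q1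
        = (1 + s) • ((‖q1‖^2 : ℝ) • q2 - ⟪q1, q2⟫ • q1) := by
      ext B
      simp only [PiLp.smul_apply, PiLp.sub_apply, real_inner_smul_right, smul_eq_mul]
      ring
    rw [h1]
    simp only [hG]
    rw [hsqI, hvec, smul_smul]
    congr 1
    field_simp
  -- constancy along the two lines as eventual equalities
  have hD1 : D q1 = 0 := key q1 (Filter.Eventually.of_forall fun s => by
    show G (q2 + s • q1) A = G q2 A
    rw [hinv1 s])
  have hD2 : D q2 = 0 := by
    refine key q2 ?_
    have hev : ∀ᶠ s : ℝ in nhds 0, -1 < s := eventually_gt_nhds (by norm_num)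
    filter_upwards [hev] with s hs
    show G (q2 + s • q2) A = G q2 A
    rw [hinv2 s hs]
  -- sum identities
  have hsum : ∀ u : Evec n, ∑ B : Fin n, W A B * u B = D u := by
    intro u
    have hrep : ∑ B : Fin n, u B • EuclideanSpace.single B (1:ℝ) = u := by
      ext B
      show EuclideanSpace.proj (𝕜 := ℝ) B (∑ x : Fin n, u x • EuclideanSpace.single x (1:ℝ))
        = u B
      rw [map_sum]
      simp [EuclideanSpace.single_apply, Finset.sum_ite_eq']
    calc ∑ B : Fin n, W A B * u B
        = ∑ B : Fin n, D (u B • EuclideanSpace.single B (1:ℝ)) := by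
          refine Finset.sum_congr rfl fun B _ => ?_
          rw [hW A B, hfd, map_smul, smul_eq_mul, mul_comm]
      _ = D u := by rw [← map_sum, hrep]
  exact ⟨(hsum q1).trans hD1, (hsum q2).trans hD2⟩
end
end

section
/- The relativistic-particle Lagrangian is singular: at every point (t, q_0, q_1, q_2) with q_1 ≠ 0 and g(q_1, q_2) > 0, the determinant of the n×n Hessian matrix (∂²L/∂q_2^B ∂q_2^A) vanishes. -/
open scoped ContDiff RealInnerProductSpace

noncomputable section

/-- The relativistic-particle Lagrangian `L = (α/|q₁|²)√g + V(t, q₀)` is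
singular: at every point with `q₁ ≠ 0` and `g(q₁, q₂) > 0`, the determinant of its Hessian
matrix with respect to `q₂` vanishes. -/
theorem stmt13 (n : ℕ) (hn : 2 ≤ n) (α : ℝ) (hα : α ≠ 0)
    (V : ℝ × Evec n → ℝ) (hV : ContDiff ℝ ∞ V)
    (L : ℝ × Evec n × Evec n × Evec n → ℝ)
    (hL : ∀ (t : ℝ) (a b c : Evec n),
      L (t, a, b, c) = (α / ‖b‖^2) * Real.sqrt (‖b‖^2 * ‖c‖^2 - ⟪b, c⟫^2) + V (t, a))
    (t : ℝ) (q0 q1 q2 : Evec n) (hq1 : q1 ≠ 0)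
    (hg : 0 < ‖q1‖^2 * ‖q2‖^2 - ⟪q1, q2⟫^2)
    (W : Matrix (Fin n) (Fin n) ℝ)
    (hW : ∀ A B, W A B =
      fderiv ℝ (fun v : Evec n => gradient (fun w : Evec n => L (t, q0, q1, w)) v A)
        q2 (EuclideanSpace.single B 1)) :
    W.det = 0 := by
  classical
  set G : Evec n → ℝ := fun c => ‖q1‖^2 * ‖c‖^2 - ⟪q1, c⟫^2 with hGdef
  set f : Evec n → ℝ := fun c => (α / ‖q1‖^2) * Real.sqrt (G c) with hfdef
  -- G is smooth
  have hGsmooth : ContDiff ℝ ∞ G := by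
    apply ContDiff.sub
    · exact contDiff_const.mul (contDiff_norm_sq ℝ)
    · exact ((contDiff_const.inner ℝ contDiff_id)).pow 2
  -- homogeneity of G
  have hGsmul : ∀ (s : ℝ) (v : Evec n), G (s • v) = s^2 * G v := by
    intro s v
    simp only [hGdef, norm_smul, real_inner_smul_right, mul_pow, Real.norm_eq_abs, sq_abs]
    ring
  -- homogeneity of f
  have hfs : ∀ (s : ℝ) (v : Evec n), f (s • v) = |s| * f v := by
    intro s v
    simp only [hfdef, hGsmul, Real.sqrt_mul (sq_nonneg s), Real.sqrt_sq_eq_abs]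
    ring
  -- f is smooth where G ≠ 0
  have hfC : ∀ v : Evec n, G v ≠ 0 → ContDiffAt ℝ ∞ f v := by
    intro v hv
    exact contDiffAt_const.mul ((hGsmooth.contDiffAt).sqrt hv)
  have hfd : ∀ v : Evec n, G v ≠ 0 → DifferentiableAt ℝ f v := fun v hv =>
    (hfC v hv).differentiableAt (by norm_cast)
  have hGq2 : 0 < G q2 := hg
  -- fderiv of f is 0-homogeneous
  have hfderiv : ∀ s : ℝ, 0 < s → fderiv ℝ f (s • q2) = fderiv ℝ f q2 := by
    intro s hs
    have hGs : G (s • q2) ≠ 0 := by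
      rw [hGsmul]; positivity
    have h1 : (fun v : Evec n => f (s • v)) = fun v => s * f v := by
      funext v; rw [hfs, abs_of_pos hs]
    have hlin : DifferentiableAt ℝ (fun v : Evec n => s • v) q2 :=
      (s • ContinuousLinearMap.id ℝ (Evec n)).differentiableAt
    have hsm : fderiv ℝ (fun v : Evec n => s • v) q2
        = s • ContinuousLinearMap.id ℝ (Evec n) := by
      have h4 : (fun v : Evec n => s • v)
          = ⇑(s • ContinuousLinearMap.id ℝ (Evec n)) := by
        funext v; simp
      rw [h4, ContinuousLinearMap.fderiv]
    have hA : fderiv ℝ (fun v : Evec n => f (s • v)) q2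
        = (fderiv ℝ f (s • q2)).comp (s • ContinuousLinearMap.id ℝ (Evec n)) := by
      have h3 := fderiv_comp (𝕜 := ℝ) q2 (hfd _ hGs) hlin
      rw [Function.comp_def] at h3
      rw [h3, hsm]
    have hB : fderiv ℝ (fun v : Evec n => f (s • v)) q2 = s • fderiv ℝ f q2 := by
      rw [h1]
      exact fderiv_const_mul (hfd q2 hGq2.ne') s
    ext u
    have := congrFun (congrArg (fun T : Evec n →L[ℝ] ℝ => (T : Evec n → ℝ)) (hA.symm.trans hB)) u
    simp only [ContinuousLinearMap.coe_comp', Function.comp_apply,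
      ContinuousLinearMap.coe_smul', Pi.smul_apply, ContinuousLinearMap.coe_id', id_eq,
      map_smul, smul_eq_mul] at this
    exact mul_left_cancel₀ hs.ne' this
  -- the gradient map
  set F : Evec n → Evec n := fun v => gradient f v with hFdef
  -- the Lagrangian gradient equals F
  have hgradL : (fun v : Evec n => gradient (fun w : Evec n => L (t, q0, q1, w)) v) = F := by
    funext v
    have : (fun w : Evec n => L (t, q0, q1, w)) = fun w => f w + V (t, q0) := by
      funext w; rw [hL]
    rw [this, hFdef]
    unfold gradient
    rw [fderiv_add_const]
  -- F is constant along the ray through q2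
  have hFray : ∀ s : ℝ, 0 < s → F (s • q2) = F q2 := by
    intro s hs
    simp only [hFdef]
    unfold gradient
    rw [hfderiv s hs]
  -- F is differentiable at q2
  have hfC2 : ContDiffAt ℝ 1 (fderiv ℝ f) q2 := (hfC q2 hGq2.ne').fderiv_right (by norm_cast)
  have hFdiff : DifferentiableAt ℝ F q2 := by
    have h1 : DifferentiableAt ℝ (fderiv ℝ f) q2 := hfC2.differentiableAt one_ne_zero
    exact ((InnerProductSpace.toDual ℝ (Evec n)).symm.differentiable.differentiableAt).comp q2 h1
  -- the directional derivative of F at q2 along q2 vanishes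
  have hkey : fderiv ℝ F q2 q2 = 0 := by
    set ψ : ℝ → Evec n := fun s => F (s • q2) with hψdef
    have hconst : ψ =ᶠ[nhds (1 : ℝ)] fun _ => F q2 := by
      filter_upwards [eventually_gt_nhds (zero_lt_one)] with s hs
      exact hFray s hs
    have hψd : fderiv ℝ ψ 1 = 0 := by
      rw [hconst.fderiv_eq, fderiv_fun_const]
      rfl
    have hlin : DifferentiableAt ℝ (fun s : ℝ => s • q2) (1 : ℝ) :=
      ((1 : ℝ →L[ℝ] ℝ).smulRight q2).differentiableAt
    have hcomp : fderiv ℝ ψ 1 = (fderiv ℝ F ((1:ℝ) • q2)).comp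
        (fderiv ℝ (fun s : ℝ => s • q2) 1) := by
      have h1 : DifferentiableAt ℝ F ((1:ℝ) • q2) := by rwa [one_smul]
      exact fderiv_comp (𝕜 := ℝ) 1 h1 hlin
    have h2 : fderiv ℝ (fun s : ℝ => s • q2) 1 = (1 : ℝ →L[ℝ] ℝ).smulRight q2 := by
      have : (fun s : ℝ => s • q2) = ((1 : ℝ →L[ℝ] ℝ).smulRight q2 : ℝ → Evec n) := by
        funext s; simp
      rw [this]
      exact ((1 : ℝ →L[ℝ] ℝ).smulRight q2).fderiv
    have := congrFun (congrArg (fun T : ℝ →L[ℝ] Evec n => (T : ℝ → Evec n))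
      (hψd.symm.trans hcomp)) 1
    simp only [h2, ContinuousLinearMap.coe_comp', Function.comp_apply,
      ContinuousLinearMap.smulRight_apply, ContinuousLinearMap.one_apply, one_smul,
      ContinuousLinearMap.zero_apply] at this
    exact this.symm
  -- entries of W in terms of fderiv F
  have hWentry : ∀ A B, W A B = fderiv ℝ F q2 (EuclideanSpace.single B 1) A := by
    intro A B
    rw [hW A B]
    have hc : (fun v : Evec n => gradient (fun w : Evec n => L (t, q0, q1, w)) v A)
        = fun v => EuclideanSpace.proj A (F v) := by
      funext v
      rw [congrFun hgradL v]
      rfl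
    rw [hc]
    have := fderiv_comp (𝕜 := ℝ) q2
      ((EuclideanSpace.proj (𝕜 := ℝ) A).differentiableAt) hFdiff
    rw [Function.comp_def] at this
    rw [this, (EuclideanSpace.proj (𝕜 := ℝ) A).fderiv]
    rfl
  -- q2 as a sum of basis vectors
  have hq2sum : q2 = ∑ B, q2 B • EuclideanSpace.single B 1 := by
    ext i
    have : (∑ B, q2 B • EuclideanSpace.single B (1:ℝ)) i
        = ∑ B, (q2 B • EuclideanSpace.single B (1:ℝ)) i :=
      by rw [WithLp.ofLp_sum]; exact Finset.sum_apply i Finset.univ _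
    rw [this]
    simp [EuclideanSpace.single_apply]
  -- the kernel vector
  have hq2ne : q2 ≠ 0 := by
    intro h
    rw [h] at hg
    simp at hg
  rw [← Matrix.exists_mulVec_eq_zero_iff]
  refine ⟨fun B => q2 B, ?_, ?_⟩
  · intro h
    apply hq2ne
    ext i
    exact congrFun h i
  · funext A
    have h0 : fderiv ℝ F q2 (∑ B, q2 B • EuclideanSpace.single B (1:ℝ)) A = 0 := by
      rw [← hq2sum, hkey]; rfl
    rw [map_sum] at h0
    have hsum : (∑ B, fderiv ℝ F q2 (q2 B • EuclideanSpace.single B (1:ℝ))) A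
        = ∑ B, q2 B * fderiv ℝ F q2 (EuclideanSpace.single B 1) A := by
      have h5 := Finset.sum_apply A Finset.univ
        (fun B => fderiv ℝ F q2 (q2 B • EuclideanSpace.single B (1:ℝ)))
      rw [WithLp.ofLp_sum, h5]
      refine Finset.sum_congr rfl fun B _ => ?_
      rw [map_smul]
      rfl
    rw [hsum] at h0
    simp only [Matrix.mulVec, dotProduct, hWentry, Pi.zero_apply]
    rw [← h0]
    exact Finset.sum_congr rfl fun B _ => mul_comm _ _
end
end

section
/- For all q_1, q_2 ∈ ℝⁿ with q_1 ≠ 0 and g(q_1, q_2) > 0, the Jacobi–Ostrogradsky momentum p¹(q_1, q_2) = (α/(|q_1|²√g))(|q_1|² q_2 − ⟨q_1, q_2⟩ q_1) satisfies the primary constraints of the relativistic particle: ⟨p¹, q_1⟩ = 0 and |p¹|² = α²/|q_1|² (equivalently |p¹|²|q_1|² = α²), and moreover ⟨p¹, q_2⟩ = α√(g(q_1,q_2))/|q_1|². -/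
open scoped RealInnerProductSpace

noncomputable section

/-- The highest Jacobi–Ostrogradsky momentum
`p¹ = (α/(|q₁|²√g))(|q₁|² q₂ − ⟨q₁,q₂⟩ q₁)` of the relativistic particle satisfies the
primary constraints `⟨p¹, q₁⟩ = 0` and `|p¹|² = α²/|q₁|²` (equivalently
`|p¹|²|q₁|² = α²`), and moreover `⟨p¹, q₂⟩ = α√g/|q₁|²`. -/
theorem stmt14 (n : ℕ) (hn : 2 ≤ n) (α : ℝ) (hα : α ≠ 0)
    (q1 q2 : Evec n) (hq1 : q1 ≠ 0)
    (hg : 0 < ‖q1‖^2 * ‖q2‖^2 - ⟪q1, q2⟫^2)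
    (p1 : Evec n)
    (hp1 : p1 = (α / (‖q1‖^2 * Real.sqrt (‖q1‖^2 * ‖q2‖^2 - ⟪q1, q2⟫^2))) •
      (‖q1‖^2 • q2 - ⟪q1, q2⟫ • q1)) :
    ⟪p1, q1⟫ = 0 ∧
    ‖p1‖^2 = α^2 / ‖q1‖^2 ∧
    ‖p1‖^2 * ‖q1‖^2 = α^2 ∧
    ⟪p1, q2⟫ = α * Real.sqrt (‖q1‖^2 * ‖q2‖^2 - ⟪q1, q2⟫^2) / ‖q1‖^2 := by
  set g : ℝ := ‖q1‖^2 * ‖q2‖^2 - ⟪q1, q2⟫^2 with hgdef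
  set s : ℝ := Real.sqrt g with hsdef
  have hs_pos : 0 < s := Real.sqrt_pos.mpr hg
  have hs_sq : s^2 = g := Real.sq_sqrt hg.le
  have hq1' : (0:ℝ) < ‖q1‖ := norm_pos_iff.mpr hq1
  have hn1 : (0:ℝ) < ‖q1‖^2 := by positivity
  have hn1' : (‖q1‖:ℝ)^2 ≠ 0 := hn1.ne'
  have hs' : s ≠ 0 := hs_pos.ne'
  set c : ℝ := α / (‖q1‖^2 * s) with hcdef
  have key : ∀ x : Evec n, ⟪p1, x⟫ = c * (‖q1‖^2 * ⟪q2, x⟫ - ⟪q1, q2⟫ * ⟪q1, x⟫) := by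
    intro x
    rw [hp1, real_inner_smul_left, inner_sub_left, real_inner_smul_left,
      real_inner_smul_left]
  have hip1 : ⟪p1, q1⟫ = 0 := by
    rw [key, real_inner_comm q2 q1, real_inner_self_eq_norm_sq]
    ring
  have hip2 : ⟪p1, q2⟫ = c * g := by
    rw [key, real_inner_self_eq_norm_sq, hgdef]
    ring
  have h1 : ⟪q1, p1⟫ = 0 := by rw [real_inner_comm]; exact hip1
  have h2 : ⟪q2, p1⟫ = c * g := by rw [real_inner_comm]; exact hip2
  have hnorm : ‖p1‖^2 = c^2 * (‖q1‖^2 * g) := by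
    rw [← real_inner_self_eq_norm_sq, key, h1, h2]
    ring
  have hcg : c * g = α * s / ‖q1‖^2 := by
    rw [hcdef]
    field_simp
    rw [← hs_sq]
  have hnorm' : ‖p1‖^2 = α^2 / ‖q1‖^2 := by
    rw [hnorm, hcdef]
    field_simp
    rw [← hs_sq]
  refine ⟨hip1, hnorm', ?_, by rw [hip2, hcg]⟩
  rw [hnorm']; field_simp
end
end

section
/- Let q_1, q_2, p^0, p^1 : ℝ → ℝⁿ be smooth curves with q_1(t) ≠ 0 and g(q_1(t), q_2(t)) > 0 for all t, satisfying the unified-formalism equations of the relativistic particle: q_1′ = q_2, p^1(t) = (α/(|q_1|²√g))(|q_1|² q_2 − ⟨q_1, q_2⟩ q_1), and (p^1)′ = −p^0 − (α/(|q_1|⁴√g))[(|q_1|²|q_2|² − 2⟨q_1, q_2⟩²) q_1 + ⟨q_1, q_2⟩ |q_1|² q_2]. Then the derivative along the dynamics of the primary constraint φ₁ = ⟨p^1, q_1⟩ is (d/dt)⟨p^1(t), q_1(t)⟩ = −⟨p^0(t), q_1(t)⟩ for all t (yielding the first-generation secondary constraint ⟨p^0, q_1⟩ = 0). -/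
open scoped ContDiff RealInnerProductSpace

noncomputable section

/-- Along any solution of the unified-formalism equations of the
relativistic particle, the time derivative of the primary constraint `φ₁ = ⟨p¹, q₁⟩` is
`−⟨p⁰, q₁⟩`, yielding the first-generation secondary constraint `⟨p⁰, q₁⟩ = 0`. -/
theorem stmt15 (n : ℕ) (hn : 2 ≤ n) (α : ℝ) (hα : α ≠ 0)
    (q1 q2 p0 p1 : ℝ → Evec n)
    (hq1s : ContDiff ℝ ∞ q1) (hq2s : ContDiff ℝ ∞ q2)
    (hp0s : ContDiff ℝ ∞ p0) (hp1s : ContDiff ℝ ∞ p1)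
    (hq1 : ∀ t, q1 t ≠ 0)
    (hg : ∀ t, 0 < ‖q1 t‖^2 * ‖q2 t‖^2 - ⟪q1 t, q2 t⟫^2)
    (hhol : ∀ t, deriv q1 t = q2 t)
    (hp1 : ∀ t, p1 t =
      (α / (‖q1 t‖^2 * Real.sqrt (‖q1 t‖^2 * ‖q2 t‖^2 - ⟪q1 t, q2 t⟫^2))) •
        (‖q1 t‖^2 • q2 t - ⟪q1 t, q2 t⟫ • q1 t))
    (hp1' : ∀ t, deriv p1 t =
      - p0 t -
        (α / (‖q1 t‖^4 * Real.sqrt (‖q1 t‖^2 * ‖q2 t‖^2 - ⟪q1 t, q2 t⟫^2))) •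
          ((‖q1 t‖^2 * ‖q2 t‖^2 - 2 * ⟪q1 t, q2 t⟫^2) • q1 t
            + (⟪q1 t, q2 t⟫ * ‖q1 t‖^2) • q2 t)) :
    ∀ t, deriv (fun s => ⟪p1 s, q1 s⟫) t = - ⟪p0 t, q1 t⟫ := by
  intro t
  have hd1 : DifferentiableAt ℝ p1 t := (hp1s.differentiable (by simp)) t
  have hd2 : DifferentiableAt ℝ q1 t := (hq1s.differentiable (by simp)) t
  rw [deriv_inner_apply (𝕜 := ℝ) hd1 hd2, hp1' t, hhol t, hp1 t]
  set a := ‖q1 t‖^2 with ha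
  set b := ‖q2 t‖^2 with hb
  set s := ⟪q1 t, q2 t⟫ with hs
  have ha0 : 0 < a := by rw [ha]; exact pow_pos (norm_pos_iff.2 (hq1 t)) 2
  have ha0' : a ≠ 0 := ne_of_gt ha0
  have hgpos : 0 < a * b - s^2 := hg t
  have hr : Real.sqrt (a * b - s^2) ≠ 0 := by positivity
  have hr2 : Real.sqrt (a*b - s^2) * Real.sqrt (a*b - s^2) = a*b - s^2 :=
    Real.mul_self_sqrt hgpos.le
  simp only [inner_sub_left, inner_add_left, inner_smul_left, inner_sub_right,
    inner_add_right, inner_smul_right, inner_neg_left, real_inner_self_eq_norm_sq,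
    ← ha, ← hb, ← hs, conj_trivial]
  have hQ : ⟪q2 t, q1 t⟫ = s := real_inner_comm _ _
  rw [hQ]
  set P := ⟪p0 t, q1 t⟫ with hP
  set r := Real.sqrt (a * b - s^2) with hrdef
  have h4 : ‖q1 t‖^4 = a * a := by rw [ha]; ring
  rw [h4]
  field_simp
  nlinarith [hr2, sq_nonneg s]
end
end

section
/- Let q_1, q_2, p^0, p^1 : ℝ → ℝⁿ be smooth curves with q_1(t) ≠ 0 and g(q_1(t), q_2(t)) > 0 for all t, satisfying the unified-formalism equations of the relativistic particle: q_1′ = q_2, p^1(t) = (α/(|q_1|²√g))(|q_1|² q_2 − ⟨q_1, q_2⟩ q_1), and (p^1)′ = −p^0 − (α/(|q_1|⁴√g))[(|q_1|²|q_2|² − 2⟨q_1, q_2⟩²) q_1 + ⟨q_1, q_2⟩ |q_1|² q_2]. Then the derivative along the dynamics of the primary constraint φ₂ = |p^1|² − α²/|q_1|² is (d/dt)(|p^1(t)|² − α²/|q_1(t)|²) = −2⟨p^0(t), p^1(t)⟩ for all t (yielding the first-generation secondary constraint ⟨p^0, p^1⟩ = 0). -/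
open scoped ContDiff RealInnerProductSpace

noncomputable section

private lemma stmt16_aux1 (α A C B s : ℝ) (hA : A ≠ 0) (hs : s ≠ 0)
    (h : s^2 = A*C - B^2) :
    α / (A * s) * (A * C - B * B) = α * s / A := by
  field_simp
  linear_combination (-α) * h

private lemma stmt16_aux2 (α a s B C P : ℝ) (ha : a ≠ 0) (hs : s ≠ 0) :
    -P - α / (a^4 * s) * ((a^2*C - 2*B^2)*0 + B*a^2*(α*s/a^2)) = -P - α^2*B/a^4 := by
  have h2 : a^2 ≠ 0 := pow_ne_zero _ ha
  field_simp
  ring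

private lemma stmt16_aux3 (α a B P : ℝ) (ha : a ≠ 0) :
    (-P - α^2*B/a^4) + (-P - α^2*B/a^4) - (0*a^2 - α^2*(B+B))/(a^2)^2 = -(2*P) := by
  field_simp
  ring

/-- Along any solution of the unified-formalism equations of the
relativistic particle, the time derivative of the primary constraint
`φ₂ = |p¹|² − α²/|q₁|²` is `−2⟨p⁰, p¹⟩`, yielding the first-generation secondary
constraint `⟨p⁰, p¹⟩ = 0`. -/
theorem stmt16 (n : ℕ) (hn : 2 ≤ n) (α : ℝ) (hα : α ≠ 0)
    (q1 q2 p0 p1 : ℝ → Evec n)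
    (hq1s : ContDiff ℝ ∞ q1) (hq2s : ContDiff ℝ ∞ q2)
    (hp0s : ContDiff ℝ ∞ p0) (hp1s : ContDiff ℝ ∞ p1)
    (hq1 : ∀ t, q1 t ≠ 0)
    (hg : ∀ t, 0 < ‖q1 t‖^2 * ‖q2 t‖^2 - ⟪q1 t, q2 t⟫^2)
    (hhol : ∀ t, deriv q1 t = q2 t)
    (hp1 : ∀ t, p1 t =
      (α / (‖q1 t‖^2 * Real.sqrt (‖q1 t‖^2 * ‖q2 t‖^2 - ⟪q1 t, q2 t⟫^2))) •
        (‖q1 t‖^2 • q2 t - ⟪q1 t, q2 t⟫ • q1 t))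
    (hp1' : ∀ t, deriv p1 t =
      - p0 t -
        (α / (‖q1 t‖^4 * Real.sqrt (‖q1 t‖^2 * ‖q2 t‖^2 - ⟪q1 t, q2 t⟫^2))) •
          ((‖q1 t‖^2 * ‖q2 t‖^2 - 2 * ⟪q1 t, q2 t⟫^2) • q1 t
            + (⟪q1 t, q2 t⟫ * ‖q1 t‖^2) • q2 t)) :
    ∀ t, deriv (fun s => ‖p1 s‖^2 - α^2 / ‖q1 s‖^2) t = - (2 * ⟪p0 t, p1 t⟫) := by
  intro t
  have hGpos : 0 < ‖q1 t‖^2 * ‖q2 t‖^2 - ⟪q1 t, q2 t⟫^2 := hg t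
  have hspos : 0 < Real.sqrt (‖q1 t‖^2 * ‖q2 t‖^2 - ⟪q1 t, q2 t⟫^2) :=
    Real.sqrt_pos.2 hGpos
  have hs2 : (Real.sqrt (‖q1 t‖^2 * ‖q2 t‖^2 - ⟪q1 t, q2 t⟫^2))^2
      = ‖q1 t‖^2 * ‖q2 t‖^2 - ⟪q1 t, q2 t⟫^2 := Real.sq_sqrt hGpos.le
  have hA0 : ‖q1 t‖ ≠ 0 := norm_ne_zero_iff.2 (hq1 t)
  have hsne : Real.sqrt (‖q1 t‖^2 * ‖q2 t‖^2 - ⟪q1 t, q2 t⟫^2) ≠ 0 := ne_of_gt hspos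
  have hq1d : HasDerivAt q1 (q2 t) t := by
    have h := ((hq1s.differentiable (by simp)).differentiableAt (x := t)).hasDerivAt
    rwa [hhol t] at h
  have hp1d : HasDerivAt p1 (deriv p1 t) t :=
    ((hp1s.differentiable (by simp)).differentiableAt (x := t)).hasDerivAt
  have h1 : HasDerivAt (fun s => ⟪p1 s, p1 s⟫)
      (⟪p1 t, deriv p1 t⟫ + ⟪deriv p1 t, p1 t⟫) t := hp1d.inner ℝ hp1d
  have h2 : HasDerivAt (fun s => ⟪q1 s, q1 s⟫) (⟪q1 t, q2 t⟫ + ⟪q2 t, q1 t⟫) t :=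
    hq1d.inner ℝ hq1d
  have hq1sq : (⟪q1 t, q1 t⟫ : ℝ) ≠ 0 := by
    rw [real_inner_self_eq_norm_sq]; positivity
  have h3 : HasDerivAt (fun s => α^2 / ⟪q1 s, q1 s⟫)
      ((0 * ⟪q1 t, q1 t⟫ - α^2 * (⟪q1 t, q2 t⟫ + ⟪q2 t, q1 t⟫)) / (⟪q1 t, q1 t⟫)^2) t :=
    (hasDerivAt_const t (α^2)).div h2 hq1sq
  have h4 := h1.sub h3
  simp only [real_inner_self_eq_norm_sq] at h4
  rw [show (fun s => ‖p1 s‖^2 - α^2 / ‖q1 s‖^2) = ((fun s => ‖p1 s‖ ^ 2) - fun s => α ^ 2 / ‖q1 s‖ ^ 2) from rfl, h4.deriv]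
  -- key scalar identities
  have hpq1 : (⟪p1 t, q1 t⟫ : ℝ) = 0 := by
    rw [hp1 t]
    simp only [inner_smul_left, inner_sub_left, real_inner_self_eq_norm_sq, conj_trivial,
      real_inner_comm (q2 t) (q1 t)]
    ring
  have hpq2 : (⟪p1 t, q2 t⟫ : ℝ) =
      α * Real.sqrt (‖q1 t‖^2 * ‖q2 t‖^2 - ⟪q1 t, q2 t⟫^2) / ‖q1 t‖^2 := by
    rw [hp1 t]
    simp only [inner_smul_left, inner_sub_left, real_inner_self_eq_norm_sq, conj_trivial]
    exact stmt16_aux1 α _ _ _ _ (pow_ne_zero 2 hA0) hsne hs2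
  have hdp : (⟪deriv p1 t, p1 t⟫ : ℝ) = -⟪p0 t, p1 t⟫ - α^2 * ⟪q1 t, q2 t⟫ / ‖q1 t‖^4 := by
    rw [hp1' t]
    simp only [inner_sub_left, inner_add_left, inner_smul_left, inner_neg_left, conj_trivial]
    rw [real_inner_comm (p1 t) (q1 t), real_inner_comm (p1 t) (q2 t), hpq1, hpq2]
    exact stmt16_aux2 α ‖q1 t‖ _ _ _ _ hA0 hsne
  have hpd : (⟪p1 t, deriv p1 t⟫ : ℝ) = -⟪p0 t, p1 t⟫ - α^2 * ⟪q1 t, q2 t⟫ / ‖q1 t‖^4 := by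
    rw [real_inner_comm]; exact hdp
  rw [hdp, hpd, real_inner_comm (q2 t) (q1 t)]
  exact stmt16_aux3 α ‖q1 t‖ _ _ hA0
end
end
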